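/- In Mem⁰, suppose n is the smallest natural number such that there exists some k ≥ 1 with G(n, k) = m. Then the frontier value G(n_∞) = G(n, n+1) equals m. -/
import Mathlib

/-- Grundy value of Mem⁰: options of (n,k) are (n-a, a) for 1 ≤ a ≤ n, a ≠ k. -/
noncomputable def memZeroG (n k : ℕ) : ℕ :=
  sInf {v : ℕ | v ∉ (((Finset.Icc 1 n).erase k).attach.image
    (fun a => memZeroG (n - a.1) a.1))}
termination_by n
decreasing_by
  have h := Finset.mem_Icc.mp (Finset.mem_of_mem_erase a.2)
  omega

lemma memZero_mem_opts {n k v : ℕ} :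
    v ∈ (((Finset.Icc 1 n).erase k).attach.image
      (fun a => memZeroG (n - a.1) a.1)) ↔
    ∃ a, a ≠ k ∧ 1 ≤ a ∧ a ≤ n ∧ memZeroG (n - a) a = v := by
  simp only [Finset.mem_image, Finset.mem_attach, true_and, Subtype.exists,
    Finset.mem_erase, Finset.mem_Icc]
  constructor
  · rintro ⟨a, ⟨hne, h1, h2⟩, hv⟩; exact ⟨a, hne, h1, h2, hv⟩
  · rintro ⟨a, hne, h1, h2, hv⟩; exact ⟨a, ⟨hne, h1, h2⟩, hv⟩

lemma compl_nonempty (S : Finset ℕ) : {v : ℕ | v ∉ S}.Nonempty :=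
  ⟨S.sup id + 1, fun h => by have := Finset.le_sup (f := id) h; simp only [id_eq] at this; omega⟩

theorem memZero_first_occurrence_on_frontier (n m : ℕ)
    (h : ∃ k : ℕ, 1 ≤ k ∧ memZeroG n k = m)
    (hmin : ∀ n' < n, ∀ k : ℕ, 1 ≤ k → memZeroG n' k ≠ m) :
    memZeroG n (n + 1) = m := by
  obtain ⟨k, hk1, hk⟩ := h
  rw [memZeroG] at hk ⊢
  set Sk := (((Finset.Icc 1 n).erase k).attach.image
    (fun a => memZeroG (n - a.1) a.1)) with hSk
  set Sf := (((Finset.Icc 1 n).erase (n+1)).attach.image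
    (fun a => memZeroG (n - a.1) a.1)) with hSf
  have hmA : m ∉ Sk := by
    rw [← hk]; exact Nat.sInf_mem (compl_nonempty Sk)
  apply le_antisymm
  · -- sInf B ≤ m : m ∉ Sf
    apply Nat.sInf_le
    intro hm
    obtain ⟨a, hne, h1, h2, hv⟩ := memZero_mem_opts.mp hm
    by_cases hak : a = k
    · subst hak
      exact hmin (n - a) (by omega) a h1 hv
    · exact hmA (memZero_mem_opts.mpr ⟨a, hak, h1, h2, hv⟩)
  · -- m = sInf A ≤ sInf B
    rw [← hk]
    apply Nat.sInf_le
    have hB : sInf {v : ℕ | v ∉ Sf} ∉ Sf := Nat.sInf_mem (compl_nonempty Sf)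
    intro hmem
    obtain ⟨a, hne, h1, h2, hv⟩ := memZero_mem_opts.mp hmem
    exact hB (memZero_mem_opts.mpr ⟨a, by omega, h1, h2, hv⟩)
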